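/- Let q ≥ 5 and let 𝒞 be the [q+1, q-3, 5]_q MDS code associated with the twisted cubic, with weight distribution A_w. Every weight-1 coset V of 𝒞 satisfies B_4(V) = C(q,4) and, for w ≥ 5, B_w(V) = A_w + (-1)^w * ( C(q+1, w)*C(w-1, 3) - C(q, w-1)*C(w-2, 2) ). -/

import Mathlib

def twistedCubic (F : Type*) [Field F] : Option F → Fin 4 → F
  | some t => ![1, t, t ^ 2, t ^ 3]
  | none => ![0, 0, 0, 1]

open Finset Polynomial

set_option linter.unusedSectionVars false

lemma altsum (n : ℕ) : ∀ m : ℕ, ∑ i ∈ range (m+1), (-1:ℤ)^i * (n+1).choose i = (-1)^m * n.choose m := by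
  intro m
  induction m with
  | zero => simp
  | succ m ih =>
    rw [Finset.sum_range_succ, ih]
    have h1 : ((n+1).choose (m+1) : ℤ) = n.choose m + n.choose (m+1) := by
      rw [Nat.choose_succ_succ n m]; push_cast; ring
    rw [h1, pow_succ]
    ring

lemma neg_one_pow_sub {a b : ℕ} (h : b ≤ a) : (-1:ℤ)^(a-b) = (-1)^a * (-1)^b := by
  have h1 : (-1:ℤ)^(a-b) * (-1)^b = (-1)^a := by
    rw [← pow_add, Nat.sub_add_cancel h]
  calc (-1:ℤ)^(a-b) = (-1)^(a-b) * ((-1)^b * (-1)^b) := by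
        rw [← pow_add, ← two_mul, pow_mul]; simp
    _ = (-1)^a * (-1)^b := by rw [← mul_assoc, h1]

lemma mobius {α : Type*} [DecidableEq α] (f g : Finset α → ℤ)
    (h : ∀ S, g S = ∑ T ∈ S.powerset, f T) (S : Finset α) :
    f S = ∑ T ∈ S.powerset, (-1:ℤ)^(S.card - T.card) * g T := by
  have key : ∀ U ∈ S.powerset,
      ∑ T ∈ S.powerset.filter (fun T => U ⊆ T), (-1:ℤ)^(S.card - T.card)
        = if U = S then 1 else 0 := by
    intro U hU
    rw [Finset.mem_powerset] at hU
    have bij : ∑ T ∈ S.powerset.filter (fun T => U ⊆ T), (-1:ℤ)^(S.card - T.card)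
        = ∑ R ∈ (S \ U).powerset, (-1:ℤ)^(S.card - (U ∪ R).card) := by
      refine (Finset.sum_nbij' (fun R => U ∪ R) (fun T => T \ U) ?_ ?_ ?_ ?_ ?_).symm
      · intro R hR
        rw [Finset.mem_powerset] at hR
        simp only [Finset.mem_filter, Finset.mem_powerset]
        exact ⟨Finset.union_subset hU (hR.trans Finset.sdiff_subset), Finset.subset_union_left⟩
      · intro T hT
        simp only [Finset.mem_filter, Finset.mem_powerset] at hT
        rw [Finset.mem_powerset]
        exact Finset.sdiff_subset_sdiff hT.1 (le_refl _)
      · intro R hR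
        rw [Finset.mem_powerset] at hR
        exact Finset.union_sdiff_cancel_left
          (Finset.disjoint_left.mpr (fun a haU haR => (Finset.mem_sdiff.mp (hR haR)).2 haU))
      · intro T hT
        simp only [Finset.mem_filter, Finset.mem_powerset] at hT
        exact Finset.union_sdiff_of_subset hT.2
      · intro R hR; rfl
    rw [bij]
    have hdisj : ∀ R ∈ (S \ U).powerset, Disjoint U R := fun R hR =>
      Finset.disjoint_left.mpr (fun a haU haR =>
        (Finset.mem_sdiff.mp ((Finset.mem_powerset.mp hR) haR)).2 haU)
    calc ∑ R ∈ (S \ U).powerset, (-1:ℤ)^(S.card - (U ∪ R).card)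
        = ∑ R ∈ (S \ U).powerset, (-1:ℤ)^(S.card - U.card) * (-1:ℤ)^(R.card) := by
          refine Finset.sum_congr rfl fun R hR => ?_
          rw [Finset.card_union_of_disjoint (hdisj R hR)]
          have hR' := Finset.mem_powerset.mp hR
          have h1 : R.card ≤ (S \ U).card := Finset.card_le_card hR'
          have h2 : (S\U).card = S.card - U.card := Finset.card_sdiff_of_subset hU
          have h3 : U.card + R.card ≤ S.card := by
            have := Finset.card_le_card hU; omega
          rw [neg_one_pow_sub h3, pow_add, neg_one_pow_sub (Finset.card_le_card hU)]
          ring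
      _ = (-1:ℤ)^(S.card - U.card) * ∑ R ∈ (S \ U).powerset, (-1:ℤ)^(R.card) := by
          rw [Finset.mul_sum]
      _ = if U = S then 1 else 0 := by
          rw [Finset.sum_powerset_neg_one_pow_card]
          by_cases hUS : U = S
          · subst hUS; simp
          · have : S \ U ≠ ∅ := by
              intro hemp
              exact hUS (Finset.Subset.antisymm hU (by
                intro x hx
                by_contra hxU
                exact absurd (Finset.mem_sdiff.mpr ⟨hx, hxU⟩) (by simp [hemp])))
            simp [this, hUS]
  calc f S = ∑ U ∈ S.powerset, f U * (if U = S then 1 else 0) := by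
        simp only [mul_ite, mul_one, mul_zero]
        rw [Finset.sum_ite_eq' S.powerset S f]
        simp
    _ = ∑ U ∈ S.powerset, f U * ∑ T ∈ S.powerset.filter (fun T => U ⊆ T), (-1:ℤ)^(S.card - T.card) := by
        exact Finset.sum_congr rfl fun U hU => by rw [key U hU]
    _ = ∑ U ∈ S.powerset, ∑ T ∈ S.powerset.filter (fun T => U ⊆ T), f U * (-1:ℤ)^(S.card - T.card) := by
        exact Finset.sum_congr rfl fun U hU => Finset.mul_sum _ _ _
    _ = ∑ T ∈ S.powerset, ∑ U ∈ S.powerset.filter (fun U => U ⊆ T), f U * (-1:ℤ)^(S.card - T.card) := by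
        refine Finset.sum_comm' ?_
        intro U T
        simp only [Finset.mem_filter, Finset.mem_powerset]
        tauto
    _ = ∑ T ∈ S.powerset, (-1:ℤ)^(S.card - T.card) * g T := by
        refine Finset.sum_congr rfl fun T hT => ?_
        rw [Finset.mem_powerset] at hT
        have : S.powerset.filter (fun U => U ⊆ T) = T.powerset := by
          ext U
          simp only [Finset.mem_filter, Finset.mem_powerset]
          exact ⟨fun h => h.2, fun h => ⟨h.trans hT, h⟩⟩
        rw [this, ← Finset.sum_mul, ← h T]
        ring

section Everything
variable {F : Type*} [Field F] [Fintype F] [DecidableEq F]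

def phiF (F : Type*) [Field F] [Fintype F] : (Option F → F) →ₗ[F] (Fin 4 → F) :=
  (Matrix.of (fun (i : Fin 4) (t : Option F) => twistedCubic F t i)).mulVecLin

omit [DecidableEq F] in
lemma tc_some (t : F) (i : Fin 4) : twistedCubic F (some t) i = t ^ (i : ℕ) := by
  show (![1, t, t ^ 2, t ^ 3]) i = t ^ (i:ℕ)
  fin_cases i <;> simp

omit [DecidableEq F] in

omit [DecidableEq F] in
lemma phiF_apply (u : Option F → F) (i : Fin 4) :
    phiF F u i = u none * twistedCubic F none i + ∑ t : F, u (some t) * t ^ (i:ℕ) := by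
  show (Matrix.mulVec _ u) i = _
  rw [Matrix.mulVec, dotProduct, Fintype.sum_option]
  simp only [Matrix.of_apply]
  congr 1
  · ring
  · exact Finset.sum_congr rfl fun t _ => by rw [tc_some]; ring

omit [DecidableEq F] in

omit [DecidableEq F] in
lemma pairing (u : Option F → F) (hu : phiF F u = 0) (P : F[X]) (hP : P.natDegree < 4) :
    ∑ t : F, u (some t) * P.eval t = -(u none * P.coeff 3) := by
  have row : ∀ i : Fin 4,
      ∑ t : F, u (some t) * t ^ (i:ℕ) = -(u none * twistedCubic F none i) := by
    intro i
    have h := congrFun hu i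
    rw [phiF_apply] at h
    simp only [Pi.zero_apply] at h
    linear_combination h
  have r0 : ∑ t : F, u (some t) * t ^ (0:ℕ) = 0 := by
    have := row 0; simpa [twistedCubic] using this
  have r1 : ∑ t : F, u (some t) * t ^ (1:ℕ) = 0 := by
    have := row 1; simpa [twistedCubic] using this
  have r2 : ∑ t : F, u (some t) * t ^ (2:ℕ) = 0 := by
    have := row 2; simpa [twistedCubic] using this
  have r3 : ∑ t : F, u (some t) * t ^ (3:ℕ) = -(u none) := by
    have := row 3; simpa [twistedCubic] using this
  have heval : ∀ t : F, P.eval t = ∑ i ∈ range 4, P.coeff i * t ^ i :=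
    fun t => Polynomial.eval_eq_sum_range' hP t
  calc ∑ t : F, u (some t) * P.eval t
      = ∑ t : F, ∑ i ∈ range 4, P.coeff i * (u (some t) * t ^ i) := by
        refine Finset.sum_congr rfl fun t _ => ?_
        rw [heval t, Finset.mul_sum]
        exact Finset.sum_congr rfl fun i _ => by ring
    _ = ∑ i ∈ range 4, P.coeff i * ∑ t : F, u (some t) * t ^ i := by
        rw [Finset.sum_comm]
        exact Finset.sum_congr rfl fun i _ => by rw [Finset.mul_sum]
    _ = -(u none * P.coeff 3) := by
        rw [show (4:ℕ) = 3+1 from rfl, Finset.sum_range_succ, Finset.sum_range_succ,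
          Finset.sum_range_succ, Finset.sum_range_one, r0, r1, r2, r3]
        ring

def suppF (u : Option F → F) : Finset (Option F) := univ.filter (fun t => u t ≠ 0)

lemma mem_suppF {u : Option F → F} {t : Option F} : t ∈ suppF u ↔ u t ≠ 0 := by
  simp [suppF]

lemma hammingNorm_eq_suppF (u : Option F → F) : hammingNorm u = (suppF u).card := rfl

lemma key_inj (u : Option F → F) (hu : phiF F u = 0) (h : (suppF u).card ≤ 4) : u = 0 := by
  set T : Finset F := univ.filter (fun t => u (some t) ≠ 0) with hT
  have hmemT : ∀ t : F, t ∈ T ↔ u (some t) ≠ 0 := fun t => by simp [hT]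
  have himg : T.image some ⊆ suppF u := by
    intro x hx
    rw [Finset.mem_image] at hx
    obtain ⟨t, ht, rfl⟩ := hx
    exact mem_suppF.mpr ((hmemT t).mp ht)
  have hTcard : T.card ≤ 4 := by
    rw [← Finset.card_image_of_injective T (Option.some_injective F)]
    exact le_trans (Finset.card_le_card himg) h
  -- step 1 : u none = 0
  have step1 : u none = 0 := by
    by_contra h0
    have hT3 : T.card ≤ 3 := by
      have hsub : insert none (T.image some) ⊆ suppF u :=
        Finset.insert_subset (mem_suppF.mpr h0) himg
      have hnone : none ∉ T.image some := by simp
      have := Finset.card_le_card hsub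
      rw [Finset.card_insert_of_notMem hnone,
        Finset.card_image_of_injective T (Option.some_injective F)] at this
      omega
    set P : F[X] := X ^ (3 - T.card) * ∏ t ∈ T, (X - C t) with hP
    have hmon : P.Monic := (monic_X_pow _).mul (monic_prod_of_monic _ _ fun t _ => monic_X_sub_C t)
    have hdeg : P.natDegree = 3 := by
      rw [hP, (monic_X_pow _).natDegree_mul (monic_prod_of_monic _ _ fun t _ => monic_X_sub_C t),
        natDegree_X_pow, natDegree_prod_of_monic _ _ (fun t _ => monic_X_sub_C t)]
      simp only [natDegree_X_sub_C, Finset.sum_const, smul_eq_mul, mul_one]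
      omega
    have hc3 : P.coeff 3 = 1 := by
      have := hmon.coeff_natDegree
      rwa [hdeg] at this
    have hpair := pairing u hu P (by omega)
    have hzero : ∑ t : F, u (some t) * P.eval t = 0 := by
      refine Finset.sum_eq_zero fun t _ => ?_
      by_cases ht : t ∈ T
      · have : P.eval t = 0 := by
          rw [hP, eval_mul, eval_prod]
          have hz : ∏ x ∈ T, eval t (X - C x) = 0 := Finset.prod_eq_zero ht (by simp)
          rw [hz, mul_zero]
        rw [this, mul_zero]
      · rw [not_iff_not.mpr (hmemT t) |>.mp ht |> not_not.mp, zero_mul]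
    rw [hzero, hc3] at hpair
    rw [mul_one] at hpair
    exact h0 (neg_eq_zero.mp hpair.symm)
  -- step 2
  have step2 : ∀ t0 : F, u (some t0) = 0 := by
    intro t0
    by_cases ht0 : t0 ∈ T
    · set P : F[X] := ∏ t ∈ T.erase t0, (X - C t) with hP
      have hdeg : P.natDegree < 4 := by
        rw [hP, natDegree_prod_of_monic _ _ (fun t _ => monic_X_sub_C t)]
        simp only [natDegree_X_sub_C, Finset.sum_const, smul_eq_mul, mul_one]
        have h1 := Finset.card_erase_of_mem ht0
        have h2 : 0 < T.card := Finset.card_pos.mpr ⟨t0, ht0⟩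
        omega
      have hpair := pairing u hu P hdeg
      rw [step1, zero_mul, neg_zero] at hpair
      have hsingle : ∑ t : F, u (some t) * P.eval t = u (some t0) * P.eval t0 := by
        refine Finset.sum_eq_single t0 (fun t _ hne => ?_) (fun habs => absurd (Finset.mem_univ t0) habs)
        by_cases ht : t ∈ T
        · have : P.eval t = 0 := by
            rw [hP, eval_prod]
            exact Finset.prod_eq_zero (Finset.mem_erase.mpr ⟨hne, ht⟩) (by simp)
          rw [this, mul_zero]
        · rw [not_iff_not.mpr (hmemT t) |>.mp ht |> not_not.mp, zero_mul]
      rw [hsingle] at hpair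
      have hev : P.eval t0 ≠ 0 := by
        rw [hP, eval_prod]
        refine Finset.prod_ne_zero_iff.mpr fun t ht => ?_
        simp only [eval_sub, eval_X, eval_C]
        exact sub_ne_zero.mpr (Ne.symm (Finset.mem_erase.mp ht).1)
      exact (mul_eq_zero.mp hpair).resolve_right hev
    · exact not_not.mp ((not_iff_not.mpr (hmemT t0)).mp ht0)
  funext x
  cases x with
  | none => exact step1
  | some t => exact step2 t

def extMap (S : Finset (Option F)) : (↥S → F) →ₗ[F] (Option F → F) where
  toFun x := fun t => if h : t ∈ S then x ⟨t, h⟩ else 0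
  map_add' x y := by funext t; by_cases h : t ∈ S <;> simp [h]
  map_smul' c x := by funext t; by_cases h : t ∈ S <;> simp [h]

lemma extMap_apply {S : Finset (Option F)} (x : ↥S → F) (t : Option F) :
    extMap S x t = if h : t ∈ S then x ⟨t, h⟩ else 0 := rfl

lemma extMap_supp {S : Finset (Option F)} (x : ↥S → F) {t : Option F} (ht : t ∉ S) :
    extMap S x t = 0 := by rw [extMap_apply, dif_neg ht]

lemma extMap_mem {S : Finset (Option F)} (x : ↥S → F) (s : ↥S) :
    extMap S x s.val = x s := by rw [extMap_apply, dif_pos s.property]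

lemma extMap_of_supp {S : Finset (Option F)} {u : Option F → F} (h : ∀ t ∉ S, u t = 0) :
    extMap S (fun s => u s.val) = u := by
  funext t
  rw [extMap_apply]
  by_cases ht : t ∈ S
  · rw [dif_pos ht]
  · rw [dif_neg ht, h t ht]

def psiS (S : Finset (Option F)) : (↥S → F) →ₗ[F] (Fin 4 → F) := (phiF F).comp (extMap S)

lemma suppF_extMap (S : Finset (Option F)) (x : ↥S → F) : suppF (extMap S x) ⊆ S := by
  intro t ht
  rw [mem_suppF] at ht
  by_contra h
  exact ht (extMap_supp x h)

lemma psi_inj {S : Finset (Option F)} (h4 : S.card ≤ 4) : Function.Injective (psiS (F := F) S) := by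
  rw [← LinearMap.ker_eq_bot]
  rw [LinearMap.ker_eq_bot']
  intro x hx
  have h0 : extMap S x = 0 := key_inj (extMap S x) hx
    (le_trans (Finset.card_le_card (suppF_extMap S x)) h4)
  funext s
  rw [← extMap_mem x s, h0]
  rfl

lemma finrank_pi_S (S : Finset (Option F)) : Module.finrank F (↥S → F) = S.card := by
  rw [Module.finrank_pi]
  exact Fintype.card_coe S

lemma psi_surj {S : Finset (Option F)} (h4 : 4 ≤ S.card) :
    Function.Surjective (psiS (F := F) S) := by
  obtain ⟨S4, hsub, hcard⟩ := Finset.exists_subset_card_eq h4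
  have hinj : Function.Injective (psiS (F := F) S4) := psi_inj (le_of_eq hcard)
  have hfr : Module.finrank F (↥S4 → F) = Module.finrank F (Fin 4 → F) := by
    rw [finrank_pi_S, hcard, Module.finrank_pi]; simp
  have hsurj4 : Function.Surjective (psiS (F := F) S4) :=
    (LinearMap.injective_iff_surjective_of_finrank_eq_finrank hfr).mp hinj
  intro y
  obtain ⟨x4, hx4⟩ := hsurj4 y
  refine ⟨fun s => if h : s.val ∈ S4 then x4 ⟨s.val, h⟩ else 0, ?_⟩
  have hext : extMap S (fun s => if h : s.val ∈ S4 then x4 ⟨s.val, h⟩ else 0) = extMap S4 x4 := by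
    funext t
    rw [extMap_apply, extMap_apply]
    by_cases ht4 : t ∈ S4
    · rw [dif_pos ht4, dif_pos (hsub ht4), dif_pos ht4]
    · rw [dif_neg ht4]
      by_cases ht : t ∈ S
      · rw [dif_pos ht, dif_neg ht4]
      · rw [dif_neg ht]
  show phiF F (extMap S _) = y
  rw [hext]
  exact hx4

lemma card_fiber {S : Finset (Option F)} (h4 : 4 ≤ S.card) (y : Fin 4 → F) :
    (univ.filter (fun x : ↥S → F => psiS S x = y)).card = Fintype.card F ^ (S.card - 4) := by
  obtain ⟨x0, hx0⟩ := psi_surj h4 y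
  have step1 : (univ.filter (fun x : ↥S → F => psiS S x = y)).card
      = (univ.filter (fun x : ↥S → F => psiS S x = 0)).card := by
    refine Finset.card_nbij' (fun x => x - x0) (fun x => x + x0) ?_ ?_ ?_ ?_
    · intro x hx
      rw [Finset.mem_coe, Finset.mem_filter] at hx ⊢
      refine ⟨Finset.mem_univ _, ?_⟩
      rw [map_sub, hx.2, hx0, sub_self]
    · intro x hx
      rw [Finset.mem_coe, Finset.mem_filter] at hx ⊢
      refine ⟨Finset.mem_univ _, ?_⟩
      rw [map_add, hx.2, hx0, zero_add]
    · intro x _; simp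
    · intro x _; simp
  rw [step1]
  haveI : Fintype ↥(LinearMap.ker (psiS (F := F) S)) := Fintype.ofFinite _
  have e : ↥(LinearMap.ker (psiS (F := F) S)) ≃ {x : ↥S → F // psiS S x = 0} :=
    Equiv.subtypeEquivRight (fun x => LinearMap.mem_ker)
  have step2 : (univ.filter (fun x : ↥S → F => psiS S x = 0)).card
      = Fintype.card ↥(LinearMap.ker (psiS (F := F) S)) := by
    rw [Fintype.card_congr e, Fintype.card_subtype]
  rw [step2]
  have hrank : Module.finrank F ↥(LinearMap.ker (psiS (F := F) S)) = S.card - 4 := by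
    have hrn := LinearMap.finrank_range_add_finrank_ker (psiS (F := F) S)
    rw [finrank_pi_S] at hrn
    have hrange : LinearMap.range (psiS (F := F) S) = ⊤ :=
      LinearMap.range_eq_top.mpr (psi_surj h4)
    rw [hrange, finrank_top] at hrn
    have : Module.finrank F (Fin 4 → F) = 4 := by rw [Module.finrank_pi]; simp
    omega
  rw [← hrank]
  exact Module.card_eq_pow_finrank (K := F)

def solSet (S : Finset (Option F)) (y : Fin 4 → F) : Finset (Option F → F) :=
  univ.filter (fun u => (∀ t ∉ S, u t = 0) ∧ phiF F u = y)

lemma mem_solSet {S : Finset (Option F)} {y : Fin 4 → F} {u : Option F → F} :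
    u ∈ solSet S y ↔ (∀ t ∉ S, u t = 0) ∧ phiF F u = y := by
  simp [solSet]

lemma solSet_card_hi {S : Finset (Option F)} (h4 : 4 ≤ S.card) (y : Fin 4 → F) :
    (solSet S y).card = Fintype.card F ^ (S.card - 4) := by
  rw [← card_fiber h4 y]
  refine Finset.card_nbij' (fun u => fun s : ↥S => u s.val) (fun x => extMap S x) ?_ ?_ ?_ ?_
  · intro u hu
    rw [Finset.mem_coe, mem_solSet] at hu
    rw [Finset.mem_coe, Finset.mem_filter]
    refine ⟨Finset.mem_univ _, ?_⟩
    show phiF F (extMap S _) = y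
    rw [extMap_of_supp hu.1]
    exact hu.2
  · intro x hx
    rw [Finset.mem_coe, Finset.mem_filter] at hx
    rw [Finset.mem_coe, mem_solSet]
    exact ⟨fun t ht => extMap_supp x ht, hx.2⟩
  · intro u hu
    rw [Finset.mem_coe, mem_solSet] at hu
    exact extMap_of_supp hu.1
  · intro x _
    funext s
    exact extMap_mem x s

lemma solSet_single {c : Option F} {lam : F} (hlam : lam ≠ 0) {S : Finset (Option F)}
    (hc : c ∈ S) (h4 : S.card ≤ 4) :
    solSet S (phiF F (Pi.single c lam)) = {Pi.single c lam} := by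
  ext u
  rw [mem_solSet, Finset.mem_singleton]
  constructor
  · rintro ⟨hsupp, hphi⟩
    have hd : phiF F (u - Pi.single c lam) = 0 := by
      rw [map_sub, hphi, sub_self]
    have hsub : suppF (u - Pi.single c lam) ⊆ S := by
      intro t ht
      rw [mem_suppF] at ht
      by_contra h
      apply ht
      have h1 : u t = 0 := hsupp t h
      have h2 : (Pi.single c lam : Option F → F) t = 0 := by rw [Pi.single_eq_of_ne (show t ≠ c by rintro rfl; exact h hc)]
      simp [h1, h2]
    have := key_inj _ hd (le_trans (Finset.card_le_card hsub) h4)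
    exact sub_eq_zero.mp this
  · rintro rfl
    exact ⟨fun t ht => by rw [Pi.single_eq_of_ne (show t ≠ c by rintro rfl; exact ht hc)], rfl⟩

lemma solSet_empty {c : Option F} {lam : F} (hlam : lam ≠ 0) {S : Finset (Option F)}
    (hc : c ∉ S) (h3 : S.card ≤ 3) :
    solSet S (phiF F (Pi.single c lam)) = ∅ := by
  rw [Finset.eq_empty_iff_forall_notMem]
  intro u hu
  rw [mem_solSet] at hu
  obtain ⟨hsupp, hphi⟩ := hu
  have hd : phiF F (u - Pi.single c lam) = 0 := by rw [map_sub, hphi, sub_self]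
  have hsub : suppF (u - Pi.single c lam) ⊆ insert c S := by
    intro t ht
    rw [mem_suppF] at ht
    rw [Finset.mem_insert]
    by_contra h
    push_neg at h
    apply ht
    have h1 : u t = 0 := hsupp t h.2
    have h2 : (Pi.single c lam : Option F → F) t = 0 := by rw [Pi.single_eq_of_ne h.1]
    simp [h1, h2]
  have hcard : (insert c S).card ≤ 4 := by
    rw [Finset.card_insert_of_notMem hc]; omega
  have := key_inj _ hd (le_trans (Finset.card_le_card hsub) hcard)
  have hu : u = Pi.single c lam := sub_eq_zero.mp this
  have : u c = 0 := hsupp c hc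
  rw [hu, Pi.single_eq_same] at this
  exact hlam this

def esol (S : Finset (Option F)) (y : Fin 4 → F) : Finset (Option F → F) :=
  univ.filter (fun u => suppF u = S ∧ phiF F u = y)

lemma solSet_card_partition (S : Finset (Option F)) (y : Fin 4 → F) :
    (solSet S y).card = ∑ T ∈ S.powerset, (esol T y).card := by
  rw [Finset.card_eq_sum_card_fiberwise (f := suppF) (t := S.powerset)]
  · refine Finset.sum_congr rfl fun T hT => ?_
    congr 1
    ext u
    rw [Finset.mem_filter, mem_solSet, esol, Finset.mem_filter]
    rw [Finset.mem_powerset] at hT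
    constructor
    · rintro ⟨⟨hsupp, hphi⟩, hsT⟩
      exact ⟨Finset.mem_univ _, hsT, hphi⟩
    · rintro ⟨_, hsT, hphi⟩
      refine ⟨⟨fun t ht => ?_, hphi⟩, hsT⟩
      by_contra h
      exact ht (hT (hsT ▸ mem_suppF.mpr h))
  · intro u hu
    rw [Finset.mem_coe, mem_solSet] at hu
    rw [Finset.mem_coe, Finset.mem_powerset]
    intro t ht
    rw [mem_suppF] at ht
    by_contra h
    exact ht (hu.1 t h)

def fq (q j : ℕ) : ℤ := if 4 ≤ j then (q:ℤ)^(j-4) else 0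

def fcv (q j : ℕ) : ℤ := if 4 ≤ j then (q:ℤ)^(j-4) else 1

def Gout (q w : ℕ) : ℤ := ∑ j ∈ range (w+1), (w.choose j : ℤ) * ((-1)^(w-j) * fq q j)

def Gin (q w : ℕ) : ℤ := ∑ j ∈ range w,
  ((w-1).choose j : ℤ) * ((-1)^(w-j) * fq q j + (-1)^(w-(j+1)) * fcv q (j+1))

lemma Gout4 (q : ℕ) : Gout q 4 = 1 := by
  simp [Gout, Finset.sum_range_succ, fq]

lemma Gin4 (q : ℕ) : Gin q 4 = 0 := by
  simp [Gin, Finset.sum_range_succ, fq, fcv]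

lemma GoutW (q w : ℕ) (hw : 5 ≤ w) :
    Gout q w = (∑ j ∈ range (w-4), (-1:ℤ)^j * (w.choose j) * ((q:ℤ)^(w-4-j) - 1))
      + (-1)^w * ((w-1).choose 3) := by
  have stepA : Gout q w
      = ∑ i ∈ range (w+1), (-1:ℤ)^i * (w.choose i) * (if i ≤ w-4 then (q:ℤ)^(w-4-i) else 0) := by
    rw [Gout, ← Finset.sum_range_reflect]
    refine Finset.sum_congr rfl fun i hi => ?_
    rw [Finset.mem_range] at hi
    have hle : i ≤ w := by omega
    have h1 : w + 1 - 1 - i = w - i := by omega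
    rw [h1]
    have h2 : w - (w - i) = i := by omega
    rw [h2]
    have h3 : (w.choose (w - i) : ℤ) = w.choose i := by rw [Nat.choose_symm hle]
    rw [h3]
    have h4 : fq q (w - i) = if i ≤ w-4 then (q:ℤ)^(w-4-i) else 0 := by
      rw [fq]
      by_cases h : i ≤ w - 4
      · rw [if_pos (by omega : 4 ≤ w - i), if_pos h]
        congr 1
        omega
      · rw [if_neg (by omega), if_neg h]
    rw [h4]
    ring
  have stepB : ∑ i ∈ range (w+1), (-1:ℤ)^i * (w.choose i) * (if i ≤ w-4 then (q:ℤ)^(w-4-i) else 0)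
      = ∑ i ∈ range (w-3), (-1:ℤ)^i * (w.choose i) * (q:ℤ)^(w-4-i) := by
    rw [← Finset.sum_subset (Finset.range_subset_range.mpr (by omega : w-3 ≤ w+1))]
    · refine Finset.sum_congr rfl fun i hi => ?_
      rw [Finset.mem_range] at hi
      rw [if_pos (by omega)]
    · intro i _ hi
      rw [Finset.mem_range, not_lt] at hi
      rw [if_neg (by omega)]
      ring
  have stepC : ∑ i ∈ range (w-3), (-1:ℤ)^i * (w.choose i) * (q:ℤ)^(w-4-i)
      = ∑ i ∈ range (w-3), (-1:ℤ)^i * (w.choose i) * ((q:ℤ)^(w-4-i) - 1)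
        + ∑ i ∈ range (w-3), (-1:ℤ)^i * (w.choose i) := by
    rw [← Finset.sum_add_distrib]
    exact Finset.sum_congr rfl fun i _ => by ring
  have stepD : ∑ i ∈ range (w-3), (-1:ℤ)^i * (w.choose i) * ((q:ℤ)^(w-4-i) - 1)
      = ∑ i ∈ range (w-4), (-1:ℤ)^i * (w.choose i) * ((q:ℤ)^(w-4-i) - 1) := by
    have h : w - 3 = (w-4) + 1 := by omega
    rw [h, Finset.sum_range_succ]
    have : (q:ℤ)^(w-4-(w-4)) - 1 = 0 := by
      rw [Nat.sub_self]
      simp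
    rw [this, mul_zero, add_zero]
  have stepE : ∑ i ∈ range (w-3), (-1:ℤ)^i * (w.choose i)
      = (-1:ℤ)^w * ((w-1).choose 3) := by
    have h : w - 3 = (w-4) + 1 := by omega
    have hw' : w = (w-1) + 1 := by omega
    rw [h]
    have := altsum (w-1) (w-4)
    rw [← hw'] at this
    rw [this]
    have h1 : (w-1).choose (w-4) = (w-1).choose 3 := by
      rw [← Nat.choose_symm (by omega : w - 4 ≤ w - 1)]
      congr 1
      omega
    rw [h1]
    congr 1
    have h2 : w = (w - 4) + 4 := by omega
    calc (-1:ℤ)^(w-4) = (-1:ℤ)^(w-4) * ((-1)^4) := by norm_num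
      _ = (-1)^w := by rw [← pow_add, ← h2]
  rw [stepA, stepB, stepC, stepD, stepE]

lemma GinW (q w : ℕ) (hw : 5 ≤ w) :
    Gin q w = Gout q w - (-1:ℤ)^w * ((w-2).choose 2) := by
  have hsplit : Gin q w = (∑ j ∈ range w, ((w-1).choose j : ℤ) * ((-1)^(w-j) * fq q j))
      + (∑ j ∈ range w, ((w-1).choose j : ℤ) * ((-1)^(w-(j+1)) * fq q (j+1)))
      + (∑ j ∈ range w, ((w-1).choose j : ℤ) * ((-1)^(w-(j+1)) * (if j ≤ 2 then 1 else 0))) := by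
    rw [Gin, ← Finset.sum_add_distrib, ← Finset.sum_add_distrib]
    refine Finset.sum_congr rfl fun j hj => ?_
    have hfcv : fcv q (j+1) = fq q (j+1) + (if j ≤ 2 then 1 else 0) := by
      rw [fcv, fq]
      by_cases h : 4 ≤ j + 1
      · rw [if_pos h, if_pos h, if_neg (by omega)]
        ring
      · rw [if_neg h, if_neg h, if_pos (by omega)]
        ring
    rw [hfcv]
    ring
  -- third piece
  have hthird : ∑ j ∈ range w, ((w-1).choose j : ℤ) * ((-1)^(w-(j+1)) * (if j ≤ 2 then 1 else 0))
      = -((-1:ℤ)^w * ((w-2).choose 2)) := by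
    have htr : ∑ j ∈ range w, ((w-1).choose j : ℤ) * ((-1)^(w-(j+1)) * (if j ≤ 2 then 1 else 0))
        = ∑ j ∈ range 3, ((w-1).choose j : ℤ) * (-1)^(w-(j+1)) := by
      rw [← Finset.sum_subset (Finset.range_subset_range.mpr (by omega : 3 ≤ w))]
      · refine Finset.sum_congr rfl fun j hj => ?_
        rw [Finset.mem_range] at hj
        rw [if_pos (by omega)]
        ring
      · intro j _ hj
        rw [Finset.mem_range, not_lt] at hj
        rw [if_neg (by omega)]
        ring
    rw [htr]
    have hterm : ∀ j ∈ range 3, ((w-1).choose j : ℤ) * (-1)^(w-(j+1))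
        = -((-1)^w * ((-1)^j * ((w-1).choose j))) := by
      intro j hj
      rw [Finset.mem_range] at hj
      rw [neg_one_pow_sub (by omega : j+1 ≤ w), pow_succ]
      ring
    rw [Finset.sum_congr rfl hterm, Finset.sum_neg_distrib]
    congr 1
    rw [← Finset.mul_sum]
    congr 1
    have hw2 : w - 1 = (w-2) + 1 := by omega
    have := altsum (w-2) 2
    rw [← hw2] at this
    rw [show (3:ℕ) = 2 + 1 from rfl, this]
    norm_num
  -- first + second = Gout
  have hsecond : ∑ j ∈ range w, ((w-1).choose j : ℤ) * ((-1)^(w-(j+1)) * fq q (j+1))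
      = ∑ j ∈ range (w+1), ((w-1).choose (j-1) : ℤ) * ((-1)^(w-j) * fq q j) := by
    rw [Finset.sum_range_succ' (fun j => ((w-1).choose (j-1) : ℤ) * ((-1)^(w-j) * fq q j)) w]
    have h0 : fq q 0 = 0 := by rw [fq]; norm_num
    rw [h0]
    simp
  have hfirst : ∑ j ∈ range w, ((w-1).choose j : ℤ) * ((-1)^(w-j) * fq q j)
      = ∑ j ∈ range (w+1), ((w-1).choose j : ℤ) * ((-1)^(w-j) * fq q j) := by
    rw [Finset.sum_range_succ]
    rw [Nat.choose_eq_zero_of_lt (by omega : w - 1 < w)]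
    simp
  have hcombine : ∑ j ∈ range (w+1), ((w-1).choose j : ℤ) * ((-1)^(w-j) * fq q j)
      + ∑ j ∈ range (w+1), ((w-1).choose (j-1) : ℤ) * ((-1)^(w-j) * fq q j) = Gout q w := by
    rw [Gout, ← Finset.sum_add_distrib]
    refine Finset.sum_congr rfl fun j hj => ?_
    rcases Nat.eq_zero_or_pos j with hj0 | hj0
    · subst hj0
      have h0 : fq q 0 = 0 := by rw [fq]; norm_num
      rw [h0]
      ring
    · have hp : w.choose j = (w-1).choose (j-1) + (w-1).choose j := by
        have hw1 : w = (w-1) + 1 := by omega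
        have hj1 : j = (j-1) + 1 := by omega
        rw [hw1, hj1, Nat.choose_succ_succ]
        congr 1 <;> omega
      rw [hp]
      push_cast
      ring
  rw [hsplit, hthird, hsecond, hfirst, hcombine]
  ring

variable {c : Option F} {lam : F}

def fcnt (q : ℕ) (c : Option F) (T : Finset (Option F)) : ℤ :=
  if 4 ≤ T.card then (q:ℤ)^(T.card - 4) else if c ∈ T then 1 else 0

lemma cnt_eq (hlam : lam ≠ 0) (T : Finset (Option F)) :
    ((solSet T (phiF F (Pi.single c lam))).card : ℤ) = fcnt (Fintype.card F) c T := by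
  rw [fcnt]
  by_cases h4 : 4 ≤ T.card
  · rw [solSet_card_hi h4, if_pos h4]
    push_cast
    ring
  · rw [if_neg h4]
    by_cases hc : c ∈ T
    · rw [solSet_single hlam hc (by omega), if_pos hc]
      simp
    · rw [solSet_empty hlam hc (by omega), if_neg hc]
      simp

lemma esol_eq (hlam : lam ≠ 0) (S : Finset (Option F)) :
    ((esol S (phiF F (Pi.single c lam))).card : ℤ)
      = ∑ T ∈ S.powerset, (-1:ℤ)^(S.card - T.card) * fcnt (Fintype.card F) c T := by
  refine mobius (fun T => ((esol T (phiF F (Pi.single c lam))).card : ℤ))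
    (fun T => fcnt (Fintype.card F) c T) (fun S' => ?_) S
  show fcnt (Fintype.card F) c S' = ∑ T ∈ S'.powerset, ((esol T (phiF F (Pi.single c lam))).card : ℤ)
  rw [← cnt_eq hlam, solSet_card_partition]
  push_cast
  rfl

lemma IS_out {S : Finset (Option F)} {w : ℕ} (hcS : c ∉ S) (hScard : S.card = w) :
    ∑ T ∈ S.powerset, (-1:ℤ)^(w - T.card) * fcnt (Fintype.card F) c T
      = Gout (Fintype.card F) w := by
  rw [Finset.sum_powerset, Gout, hScard]
  refine Finset.sum_congr rfl fun j hj => ?_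
  rw [Finset.mem_range] at hj
  have hterm : ∀ T ∈ S.powersetCard j, (-1:ℤ)^(w - T.card) * fcnt (Fintype.card F) c T
      = (-1)^(w-j) * fq (Fintype.card F) j := by
    intro T hT
    rw [Finset.mem_powersetCard] at hT
    have hcT : c ∉ T := fun h => hcS (hT.1 h)
    rw [hT.2, fcnt, fq, hT.2, if_neg hcT]
  rw [Finset.sum_congr rfl hterm, Finset.sum_const, Finset.card_powersetCard, hScard,
    nsmul_eq_mul]

lemma IS_in {S : Finset (Option F)} {w : ℕ} (hcS : c ∈ S) (hScard : S.card = w) :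
    ∑ T ∈ S.powerset, (-1:ℤ)^(w - T.card) * fcnt (Fintype.card F) c T
      = Gin (Fintype.card F) w := by
  set S' := S.erase c with hS'
  have hc' : c ∉ S' := Finset.notMem_erase c S
  have hins : insert c S' = S := Finset.insert_erase hcS
  have hcard' : S'.card = w - 1 := by rw [hS', Finset.card_erase_of_mem hcS, hScard]
  have hw1 : 1 ≤ w := by
    have := Finset.card_pos.mpr ⟨c, hcS⟩; omega
  rw [← hins, Finset.sum_powerset_insert hc']
  have hfirst : ∑ T ∈ S'.powerset, (-1:ℤ)^(w - T.card) * fcnt (Fintype.card F) c T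
      = ∑ j ∈ range w, ((w-1).choose j : ℤ) * ((-1)^(w-j) * fq (Fintype.card F) j) := by
    rw [Finset.sum_powerset, hcard', show (w-1)+1 = w by omega]
    refine Finset.sum_congr rfl fun j hj => ?_
    have hterm : ∀ T ∈ S'.powersetCard j, (-1:ℤ)^(w - T.card) * fcnt (Fintype.card F) c T
        = (-1)^(w-j) * fq (Fintype.card F) j := by
      intro T hT
      rw [Finset.mem_powersetCard] at hT
      have hcT : c ∉ T := fun h => hc' (hT.1 h)
      rw [hT.2, fcnt, fq, hT.2, if_neg hcT]
    rw [Finset.sum_congr rfl hterm, Finset.sum_const, Finset.card_powersetCard, hcard',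
      nsmul_eq_mul]
  have hsecond : ∑ T ∈ S'.powerset, (-1:ℤ)^(w - (insert c T).card) * fcnt (Fintype.card F) c (insert c T)
      = ∑ j ∈ range w, ((w-1).choose j : ℤ) * ((-1)^(w-(j+1)) * fcv (Fintype.card F) (j+1)) := by
    rw [Finset.sum_powerset, hcard', show (w-1)+1 = w by omega]
    refine Finset.sum_congr rfl fun j hj => ?_
    have hterm : ∀ T ∈ S'.powersetCard j,
        (-1:ℤ)^(w - (insert c T).card) * fcnt (Fintype.card F) c (insert c T)
        = (-1)^(w-(j+1)) * fcv (Fintype.card F) (j+1) := by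
      intro T hT
      rw [Finset.mem_powersetCard] at hT
      have hcT : c ∉ T := fun h => hc' (hT.1 h)
      have hcardins : (insert c T).card = j + 1 := by
        rw [Finset.card_insert_of_notMem hcT, hT.2]
      rw [hcardins, fcnt, fcv, hcardins, if_pos (Finset.mem_insert_self c T)]
    rw [Finset.sum_congr rfl hterm, Finset.sum_const, Finset.card_powersetCard, hcard',
      nsmul_eq_mul]
  rw [hfirst, hsecond, Gin, ← Finset.sum_add_distrib]
  refine Finset.sum_congr rfl fun j hj => ?_
  ring

lemma master (hlam : lam ≠ 0) (w : ℕ) (hw : 1 ≤ w) :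
    ∑ S ∈ Finset.powersetCard w (univ : Finset (Option F)),
      ((esol S (phiF F (Pi.single c lam))).card : ℤ)
      = ((Fintype.card F).choose w : ℤ) * Gout (Fintype.card F) w
        + ((Fintype.card F).choose (w-1) : ℤ) * Gin (Fintype.card F) w := by
  set q := Fintype.card F
  have hstep : ∀ S ∈ Finset.powersetCard w (univ : Finset (Option F)),
      ((esol S (phiF F (Pi.single c lam))).card : ℤ)
        = if c ∈ S then Gin q w else Gout q w := by
    intro S hS
    rw [Finset.mem_powersetCard] at hS
    rw [esol_eq hlam, hS.2]
    by_cases hc : c ∈ S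
    · rw [if_pos hc, IS_in hc hS.2]
    · rw [if_neg hc, IS_out hc hS.2]
  rw [Finset.sum_congr rfl hstep, Finset.sum_ite, Finset.sum_const, Finset.sum_const,
    nsmul_eq_mul, nsmul_eq_mul]
  have hout : (Finset.powersetCard w (univ : Finset (Option F))).filter (fun S => c ∉ S)
      = Finset.powersetCard w ((univ : Finset (Option F)).erase c) := by
    ext S
    rw [Finset.mem_filter, Finset.mem_powersetCard, Finset.mem_powersetCard,
      Finset.subset_erase]
    tauto
  have hcard_erase : ((univ : Finset (Option F)).erase c).card = q := by
    rw [Finset.card_erase_of_mem (Finset.mem_univ c), Finset.card_univ,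
      Fintype.card_option]
    rfl
  have houtcard : ((Finset.powersetCard w (univ : Finset (Option F))).filter (fun S => c ∉ S)).card
      = q.choose w := by
    rw [hout, Finset.card_powersetCard, hcard_erase]
  have htot : (Finset.powersetCard w (univ : Finset (Option F))).card = (q+1).choose w := by
    rw [Finset.card_powersetCard, Finset.card_univ, Fintype.card_option]
  have hincard : ((Finset.powersetCard w (univ : Finset (Option F))).filter (fun S => c ∈ S)).card
      = q.choose (w-1) := by
    have hsum := Finset.card_filter_add_card_filter_not
      (s := Finset.powersetCard w (univ : Finset (Option F))) (p := fun S => c ∈ S)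
    rw [htot] at hsum
    have hpascal : (q+1).choose w = q.choose (w-1) + q.choose w := by
      have h2 := Nat.choose_succ_succ q (w-1)
      simp only [Nat.succ_eq_add_one] at h2
      rwa [show (w-1)+1 = w by omega] at h2
    have : ((Finset.powersetCard w (univ : Finset (Option F))).filter (fun S => ¬ c ∈ S)).card
        = q.choose w := houtcard
    omega
  rw [houtcard, hincard]
  ring

end Everything

/-- Weight distribution of the weight-1 cosets of the `[q+1, q-3, 5]_q` MDS code
associated with the twisted cubic: `B₄ = C(q,4)` and, for `w ≥ 5`,
`B_w = A_w + (-1)^w (C(q+1,w)·C(w-1,3) - C(q,w-1)·C(w-2,2))`. -/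
theorem weight_one_coset_distribution (F : Type*) [Field F] [Fintype F] [DecidableEq F]
    (hq : 5 ≤ Fintype.card F)
    (A : ℕ → ℤ)
    (hA : ∀ w, 5 ≤ w → A w = ((Fintype.card F + 1).choose w : ℤ) *
      ∑ j ∈ Finset.range (w - 4),
        (-1 : ℤ) ^ j * (w.choose j : ℤ) * ((Fintype.card F : ℤ) ^ (w - 4 - j) - 1))
    (hA0 : ∀ w, w < 5 → A w = 0)
    (v : Option F → F) (V : Set (Option F → F))
    (hV : V = {u | u - v ∈ LinearMap.ker
      (Matrix.of (fun (i : Fin 4) (t : Option F) => twistedCubic F t i)).mulVecLin})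
    (hwt : ∀ u ∈ V, 1 ≤ hammingNorm u)
    (hwt1 : ∃ u ∈ V, hammingNorm u = 1)
    (B : ℕ → ℕ)
    (hB : ∀ w, B w = Nat.card {u : Option F → F // u ∈ V ∧ hammingNorm u = w}) :
    B 4 = (Fintype.card F).choose 4 ∧
    ∀ w, 5 ≤ w → (B w : ℤ) = A w + (-1 : ℤ) ^ w *
      (((Fintype.card F + 1).choose w : ℤ) * (((w - 1).choose 3 : ℕ) : ℤ) -
        ((Fintype.card F).choose (w - 1) : ℤ) * (((w - 2).choose 2 : ℕ) : ℤ)) := by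
  have hVmem : ∀ u, u ∈ V ↔ phiF F u = phiF F v := by
    intro u
    rw [hV]
    simp only [Set.mem_setOf_eq, LinearMap.mem_ker]
    constructor
    · intro h
      have h2 : phiF F u - phiF F v = 0 := by rw [← map_sub]; exact h
      exact sub_eq_zero.mp h2
    · intro h
      show phiF F (u - v) = 0
      rw [map_sub, h, sub_self]
  obtain ⟨u₀, hu₀V, hu₀n⟩ := hwt1
  have hcard1 : (suppF u₀).card = 1 := by rw [← hammingNorm_eq_suppF]; exact hu₀n
  obtain ⟨c, hc⟩ := Finset.card_eq_one.mp hcard1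
  have hlam : u₀ c ≠ 0 := mem_suppF.mp (hc ▸ Finset.mem_singleton_self c)
  have hu₀ : u₀ = Pi.single c (u₀ c) := by
    funext t
    by_cases ht : t = c
    · subst ht; rw [Pi.single_eq_same]
    · rw [Pi.single_eq_of_ne ht]
      have h1 : t ∉ suppF u₀ := by rw [hc]; simp [ht]
      by_contra h2
      exact h1 (mem_suppF.mpr h2)
  have hs : phiF F v = phiF F (Pi.single c (u₀ c)) := by
    rw [← hu₀]
    exact ((hVmem u₀).mp hu₀V).symm
  have hBw : ∀ w : ℕ, (B w : ℤ) = ∑ S ∈ Finset.powersetCard w (univ : Finset (Option F)),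
      ((esol S (phiF F (Pi.single c (u₀ c)))).card : ℤ) := by
    intro w
    have h1 : B w = (univ.filter (fun u : Option F → F =>
        phiF F u = phiF F (Pi.single c (u₀ c)) ∧ hammingNorm u = w)).card := by
      rw [hB w]
      have e : {u : Option F → F // u ∈ V ∧ hammingNorm u = w}
          ≃ {u : Option F → F // phiF F u = phiF F (Pi.single c (u₀ c)) ∧ hammingNorm u = w} :=
        Equiv.subtypeEquivRight (fun u => by rw [hVmem u, hs])
      rw [Nat.card_congr e, Nat.card_eq_fintype_card, Fintype.card_subtype]
    have h2 : (univ.filter (fun u : Option F → F =>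
        phiF F u = phiF F (Pi.single c (u₀ c)) ∧ hammingNorm u = w)).card
        = ∑ S ∈ Finset.powersetCard w (univ : Finset (Option F)),
          (esol S (phiF F (Pi.single c (u₀ c)))).card := by
      rw [Finset.card_eq_sum_card_fiberwise (f := suppF)
        (t := Finset.powersetCard w (univ : Finset (Option F)))]
      · refine Finset.sum_congr rfl fun S hS => ?_
        rw [Finset.mem_powersetCard] at hS
        congr 1
        ext u
        rw [Finset.mem_filter, Finset.mem_filter, esol, Finset.mem_filter]
        constructor
        · rintro ⟨⟨_, hphi, _⟩, hsupp⟩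
          exact ⟨Finset.mem_univ _, hsupp, hphi⟩
        · rintro ⟨_, hsupp, hphi⟩
          refine ⟨⟨Finset.mem_univ _, hphi, ?_⟩, hsupp⟩
          rw [hammingNorm_eq_suppF, hsupp, hS.2]
      · intro u hu
        rw [Finset.mem_coe, Finset.mem_filter] at hu
        rw [Finset.mem_coe, Finset.mem_powersetCard]
        exact ⟨Finset.subset_univ _, by rw [← hammingNorm_eq_suppF]; exact hu.2.2⟩
    rw [h1, h2]
    push_cast
    rfl
  have hmain : ∀ w : ℕ, 1 ≤ w → (B w : ℤ)
      = ((Fintype.card F).choose w : ℤ) * Gout (Fintype.card F) w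
        + ((Fintype.card F).choose (w-1) : ℤ) * Gin (Fintype.card F) w := by
    intro w hw
    rw [hBw w, master hlam w hw]
  constructor
  · have h4 := hmain 4 (by norm_num)
    rw [Gout4, Gin4] at h4
    norm_num at h4
    exact_mod_cast h4
  · intro w hw
    have h := hmain w (by omega)
    rw [GoutW (Fintype.card F) w hw, GinW (Fintype.card F) w hw] at h
    rw [h, hA w hw]
    have hpascal : ((Fintype.card F + 1).choose w : ℤ)
        = (Fintype.card F).choose (w-1) + (Fintype.card F).choose w := by
      have h2 := Nat.choose_succ_succ (Fintype.card F) (w-1)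
      simp only [Nat.succ_eq_add_one] at h2
      rw [show (w-1)+1 = w by omega] at h2
      rw [h2]
      push_cast
      ring
    rw [hpascal]
    rw [GoutW (Fintype.card F) w hw]
    ring
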